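/- Suppose that ψ, α and β are continuous, that for each x ∈ ℝ^{n-k} the map y ↦ ψ(x,y) is injective on D^k, and that for every t ∈ [0,1] either α(t) = 1 or β(t) = 1. Then the restriction of ι_ψ to the compact set D^{n-k} × D^k × [0,1] is a closed topological embedding (a homeomorphism onto its closed image). -/

import Mathlib

noncomputable section

/-- The explicit map `ι_ψ (x, y, t) = (x, α(t)·y, β(t)·ψ(x,y), t)` from
`ℝ^{n-k} × ℝ^k × ℝ` to `ℝ^{n-k} × ℝ^k × ℝ^k × ℝ`. -/
def iota {n k : ℕ}
    (ψ : EuclideanSpace ℝ (Fin (n - k)) × EuclideanSpace ℝ (Fin k) → EuclideanSpace ℝ (Fin k))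
    (α β : ℝ → ℝ) :
    EuclideanSpace ℝ (Fin (n - k)) × EuclideanSpace ℝ (Fin k) × ℝ →
      EuclideanSpace ℝ (Fin (n - k)) × EuclideanSpace ℝ (Fin k) × EuclideanSpace ℝ (Fin k) × ℝ :=
  fun p => (p.1, α p.2.2 • p.2.1, β p.2.2 • ψ (p.1, p.2.1), p.2.2)

/-- If moreover `ψ`, `α`, `β` are continuous, then the restriction of `ι_ψ` to the
compact set `D^{n-k} × D^k × [0,1]` is a closed topological embedding
(a homeomorphism onto its closed image). -/
theorem iota_closedEmbedding (n k : ℕ) (hk : 1 ≤ k) (hkn : k < n)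
    (ψ : EuclideanSpace ℝ (Fin (n - k)) × EuclideanSpace ℝ (Fin k) → EuclideanSpace ℝ (Fin k))
    (α β : ℝ → ℝ)
    (hψc : Continuous ψ) (hαc : Continuous α) (hβc : Continuous β)
    (hψ : ∀ x, Set.InjOn (fun y => ψ (x, y))
      (Metric.closedBall (0 : EuclideanSpace ℝ (Fin k)) 1))
    (hαβ : ∀ t ∈ Set.Icc (0 : ℝ) 1, α t = 1 ∨ β t = 1) :
    Topology.IsClosedEmbedding
      ((Metric.closedBall (0 : EuclideanSpace ℝ (Fin (n - k))) 1 ×ˢ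
        Metric.closedBall (0 : EuclideanSpace ℝ (Fin k)) 1 ×ˢ
          Set.Icc (0 : ℝ) 1).restrict (iota ψ α β)) := by
  set S := (Metric.closedBall (0 : EuclideanSpace ℝ (Fin (n - k))) 1 ×ˢ
        Metric.closedBall (0 : EuclideanSpace ℝ (Fin k)) 1 ×ˢ
          Set.Icc (0 : ℝ) 1) with hS
  have hScompact : IsCompact S :=
    (isCompact_closedBall _ _).prod ((isCompact_closedBall _ _).prod isCompact_Icc)
  haveI : CompactSpace S := isCompact_iff_compactSpace.mp hScompact
  have hcont : Continuous (S.restrict (iota ψ α β)) := by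
    apply Continuous.comp _ continuous_subtype_val
    unfold iota
    fun_prop
  apply hcont.isClosedEmbedding
  rintro ⟨⟨x, y, t⟩, hmem⟩ ⟨⟨x', y', t'⟩, hmem'⟩ h
  change iota ψ α β (x, y, t) = iota ψ α β (x', y', t') at h
  simp only [Set.restrict_apply, iota, Prod.mk.injEq] at h
  obtain ⟨hx, hy, ht⟩ := hmem
  obtain ⟨hx', hy', ht'⟩ := hmem'
  obtain ⟨h1, h2, h3, h4⟩ := h
  subst h1; subst h4
  have hy' : y = y' := by
    rcases hαβ t ht with hα | hβ
    · rw [hα, one_smul, one_smul] at h2; exact h2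
    · rw [hβ, one_smul, one_smul] at h3
      exact hψ x hy hy' h3
  subst hy'
  rfl
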